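/- Let d ≥ 3 be an integer, α > 0, and n ∈ ℕ. Suppose P : [0,∞) → ℝ is a polynomial satisfying P''(y) + ((d-1)/y)·P'(y) − α·y·P'(y) = −2nα·P(y) for all y > 0. Define V(y) = y^{-d}·∫₀^y P(ζ)·ζ^{d-1} dζ for y > 0. Then V satisfies V''(y) + ((d+1)/y)·V'(y) − α·y·V'(y) = −2nα·V(y) for all y > 0; that is, the partial-mass transform maps eigenfunctions of the radial Hermite operator Δ_d − αy∂_y in dimension d to eigenfunctions of Δ_{d+2} − αy∂_y in dimension d+2 with the same eigenvalue. -/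

import Mathlib

open intervalIntegral

set_option maxHeartbeats 1000000

open Polynomial in
lemma exists_antideriv (q : ℝ[X]) :
    ∃ Q : ℝ[X], derivative Q = q ∧ Q.eval 0 = 0 := by
  refine ⟨q.sum (fun k a => C (a / (k + 1)) * X ^ (k + 1)), ?_, ?_⟩
  · rw [Polynomial.sum, map_sum]
    conv_rhs => rw [← q.sum_C_mul_X_pow_eq]
    rw [Polynomial.sum]
    refine Finset.sum_congr rfl fun k _ => ?_
    have hk : ((k:ℝ) + 1) ≠ 0 := by positivity
    simp only [derivative_C_mul, derivative_X_pow, Nat.add_sub_cancel, Nat.cast_add,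
      Nat.cast_one, ← mul_assoc, ← C_mul, div_mul_cancel₀ _ hk]
  · rw [Polynomial.sum, eval_finset_sum]
    refine Finset.sum_eq_zero fun k _ => ?_
    simp

open Polynomial in

/-- The partial-mass transform `V(y) = y^{-d} ∫₀^y P(ζ) ζ^{d-1} dζ` maps eigenfunctions of
the radial Hermite operator `Δ_d − αy∂_y` (with eigenvalue `−2nα`) to eigenfunctions of
`Δ_{d+2} − αy∂_y` with the same eigenvalue. -/
theorem partial_mass_transform_of_eigenfunction
    (d : ℕ) (hd : 3 ≤ d) (α : ℝ) (hα : 0 < α) (n : ℕ)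
    (P : ℝ → ℝ) (hpoly : ∃ p : Polynomial ℝ, ∀ x : ℝ, P x = p.eval x)
    (hODE : ∀ y : ℝ, 0 < y →
      deriv (deriv P) y + ((d : ℝ) - 1) / y * deriv P y - α * y * deriv P y
        = -(2 * (n : ℝ) * α) * P y)
    (V : ℝ → ℝ)
    (hV : ∀ y : ℝ, 0 < y → V y = 1 / y ^ d * ∫ ζ in (0 : ℝ)..y, P ζ * ζ ^ (d - 1)) :
    ∀ y : ℝ, 0 < y →
      deriv (deriv V) y + ((d : ℝ) + 1) / y * deriv V y - α * y * deriv V y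
        = -(2 * (n : ℝ) * α) * V y := by
  obtain ⟨m, rfl⟩ : ∃ m, d = m + 3 := ⟨d - 3, by omega⟩
  set d := m + 3 with hdd
  obtain ⟨p, hp⟩ := hpoly
  obtain ⟨Q, hQd, hQ0⟩ := exists_antideriv (p * X ^ (d - 1))
  -- the integral equals Q.eval y
  have hint : ∀ y : ℝ, (∫ ζ in (0:ℝ)..y, P ζ * ζ ^ (d - 1)) = Q.eval y := by
    intro y
    have h1 : ∀ ζ : ℝ, P ζ * ζ ^ (d - 1) = (p * X ^ (d - 1)).eval ζ := by
      intro ζ; simp [hp]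
    have h2 : (∫ ζ in (0:ℝ)..y, P ζ * ζ ^ (d - 1))
        = ∫ ζ in (0:ℝ)..y, (p * X ^ (d - 1)).eval ζ := by
      simp only [h1]
    have h3 := intervalIntegral.integral_eq_sub_of_hasDerivAt
      (f := fun t => Q.eval t) (f' := fun t => (p * X ^ (d - 1)).eval t) (a := 0) (b := y)
      (fun x _ => by simpa [hQd] using Q.hasDerivAt x)
      (((p * X ^ (d - 1)).continuous).intervalIntegrable _ _)
    rw [h2, h3]; simp [hQ0]
  have hVQ : ∀ y : ℝ, 0 < y → V y = Q.eval y / y ^ d := by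
    intro y hy; rw [hV y hy, hint]; ring
  -- derivative of P in polynomial terms
  have hP1 : deriv P = fun x => (derivative p).eval x := by
    funext x
    rw [show P = fun x => p.eval x from funext hp]
    exact Polynomial.deriv _
  have hP2 : deriv (deriv P) = fun x => (derivative (derivative p)).eval x := by
    rw [hP1]; funext x; exact Polynomial.deriv _
  -- the ODE as polynomial identity
  set E : ℝ[X] := X * derivative (derivative p) + C ((d:ℝ) - 1) * derivative p
      - C α * X ^ 2 * derivative p + C (2 * n * α) * X * p with hE
  have hEroot : ∀ y : ℝ, 0 < y → E.eval y = 0 := by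
    intro y hy
    have h := hODE y hy
    rw [hP2, hP1, hp] at h
    simp only [hE, eval_add, eval_sub, eval_mul, eval_C, eval_X, eval_pow]
    have hyne : y ≠ 0 := hy.ne'
    field_simp at h
    nlinarith [h]
  have hE0 : E = 0 := by
    apply Polynomial.eq_zero_of_infinite_isRoot
    apply Set.Infinite.mono (s := Set.Ioi (0:ℝ)) _ (Set.Ioi_infinite 0)
    intro y hy; exact hEroot y hy
  -- the first-order identity polynomial
  set F : ℝ[X] := X ^ (d - 1) * derivative p - C α * X ^ d * p
      + C ((2 * n + d) * α) * Q with hF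
  have hFd : derivative F = X ^ (d - 2) * E := by
    simp only [hF, hE, hdd, derivative_add, derivative_sub, derivative_mul,
      derivative_C_mul, derivative_X_pow, derivative_C, derivative_X, hQd]
    push_cast
    simp only [map_add, map_mul, map_sub, map_one, map_ofNat, C_eq_natCast]
    ring
  have hF0 : F = 0 := by
    have h1 : derivative F = 0 := by rw [hFd, hE0, mul_zero]
    have h2 := Polynomial.eq_C_of_derivative_eq_zero h1
    rw [h2]
    have : F.coeff 0 = F.eval 0 := (Polynomial.coeff_zero_eq_eval_zero F).symm ▸ rfl
    rw [Polynomial.coeff_zero_eq_eval_zero] at h2 ⊢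
    simp [hF, hdd, hQ0]
  have hkey : ∀ y : ℝ, y ^ (d - 1) * (derivative p).eval y - α * y ^ d * p.eval y
      + (2 * n + d) * α * Q.eval y = 0 := by
    intro y
    have := congrArg (Polynomial.eval y) hF0
    simpa [hF] using this
  -- first derivative of V
  have hD1 : ∀ y : ℝ, 0 < y → HasDerivAt (fun t => Q.eval t / t ^ d)
      ((p.eval y * y ^ (d - 1) * y ^ d - Q.eval y * ((d : ℝ) * y ^ (d - 1))) / (y ^ d) ^ 2) y := by
    intro y hy
    have h := (Q.hasDerivAt y).div (hasDerivAt_pow d y) (pow_ne_zero d hy.ne')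
    have : (derivative Q).eval y = p.eval y * y ^ (d - 1) := by
      rw [hQd]; simp
    rw [this] at h
    exact h
  set D1 : ℝ → ℝ := fun t =>
    (p.eval t * t ^ (d - 1) * t ^ d - Q.eval t * ((d : ℝ) * t ^ (d - 1))) / (t ^ d) ^ 2 with hD1def
  have hderivV : ∀ y : ℝ, 0 < y → deriv V y = D1 y := by
    intro y hy
    have hev : V =ᶠ[nhds y] fun t => Q.eval t / t ^ d := by
      filter_upwards [Ioi_mem_nhds hy] with t ht using hVQ t ht
    rw [Filter.EventuallyEq.deriv_eq hev]
    exact (hD1 y hy).deriv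
  -- second derivative
  set N : ℝ[X] := p * X ^ (d - 1) * X ^ d - Q * (C (d:ℝ) * X ^ (d - 1)) with hN
  have hD1N : D1 = fun t => N.eval t / t ^ (2 * d) := by
    funext t
    simp only [hD1def, hN, eval_sub, eval_mul, eval_pow, eval_C, eval_X, hdd]
    push_cast
    ring
  have hD2 : ∀ y : ℝ, 0 < y → HasDerivAt D1
      (((derivative N).eval y * y ^ (2 * d) - N.eval y * ((2 * d : ℕ) * y ^ (2 * d - 1)))
        / (y ^ (2 * d)) ^ 2) y := by
    intro y hy
    rw [hD1N]
    exact (N.hasDerivAt y).div (hasDerivAt_pow (2 * d) y) (pow_ne_zero _ hy.ne')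
  have hderiv2 : ∀ y : ℝ, 0 < y → deriv (deriv V) y
      = ((derivative N).eval y * y ^ (2 * d) - N.eval y * ((2 * d : ℕ) * y ^ (2 * d - 1)))
        / (y ^ (2 * d)) ^ 2 := by
    intro y hy
    have hev : deriv V =ᶠ[nhds y] D1 := by
      filter_upwards [Ioi_mem_nhds hy] with t ht using hderivV t ht
    rw [Filter.EventuallyEq.deriv_eq hev]
    exact (hD2 y hy).deriv
  -- final computation
  intro y hy
  have hyne : y ≠ 0 := hy.ne'
  rw [hderiv2 y hy, hderivV y hy, hVQ y hy]
  have hk := hkey y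
  have hb : (derivative p).eval y
      = (α * y ^ d * p.eval y - (2 * n + d) * α * Q.eval y) / y ^ (d - 1) := by
    rw [eq_div_iff (by positivity)]
    linarith [hk]
  simp only [hD1def, hN, eval_sub, eval_mul, eval_pow, eval_C, eval_X,
    derivative_sub, derivative_mul, derivative_X_pow, derivative_C, hQd, eval_add,
    Polynomial.deriv, eval_zero]
  rw [hb]
  simp only [show d - 1 = m + 2 from rfl, show d - 2 = m + 1 from rfl,
    show 2 * d - 1 = 2 * m + 5 from rfl, show 2 * d = 2 * m + 6 from rfl,
    show d = m + 3 from rfl]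
  push_cast
  rw [show 2 * (m + 3) - 1 = 2 * m + 5 by omega]
  field_simp
  ring
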